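/- Let N be a nonzero rational number and let q be an odd prime such that the q-adic valuation of N is odd and −2 is not a square modulo q. Then the quadratic form ⟨−1, −2, N⟩ over ℚ is not equivalent to ⟨−2N⟩ ⊕ H. -/

import Mathlib

open QuadraticMap

lemma pretzel_not_dvd_aux (q : ℕ) (hq : q.Prime) (hsq : ¬ IsSquare (-2 : ZMod q))
    (x y : ℤ) (h : ¬ ((q:ℤ) ∣ x ∧ (q:ℤ) ∣ y)) : ¬ (q:ℤ) ∣ (x^2 + 2*y^2) := by
  haveI : Fact q.Prime := ⟨hq⟩
  intro hdvd
  have h0 : ((x^2 + 2*y^2 : ℤ) : ZMod q) = 0 := by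
    exact_mod_cast (ZMod.intCast_zmod_eq_zero_iff_dvd _ _).mpr hdvd
  push_cast at h0
  by_cases hy : ((y:ℤ) : ZMod q) = 0
  · have hx : ((x:ℤ) : ZMod q) = 0 := by
      have : ((x:ℤ) : ZMod q)^2 = 0 := by rw [← h0]; ring_nf; rw [hy]; ring
      exact pow_eq_zero_iff (n := 2) (by norm_num) |>.mp this
    exact h ⟨(ZMod.intCast_zmod_eq_zero_iff_dvd _ _).mp hx,
      (ZMod.intCast_zmod_eq_zero_iff_dvd _ _).mp hy⟩
  · apply hsq
    refine ⟨((x:ℤ) : ZMod q) * (((y:ℤ) : ZMod q))⁻¹, ?_⟩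
    field_simp
    linear_combination -h0

lemma pretzel_even_val_aux (q : ℕ) (hq : q.Prime) (hsq : ¬ IsSquare (-2 : ZMod q)) :
    ∀ n : ℕ, ∀ x y : ℤ, (x^2 + 2*y^2).natAbs = n → x^2 + 2*y^2 ≠ 0 →
      Even (padicValInt q (x^2 + 2*y^2)) := by
  haveI : Fact q.Prime := ⟨hq⟩
  intro n
  induction n using Nat.strong_induction_on with
  | _ n ih =>
    intro x y hn hne
    by_cases hd : (q:ℤ) ∣ x ∧ (q:ℤ) ∣ y
    · obtain ⟨⟨x', rfl⟩, ⟨y', rfl⟩⟩ := hd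
      have key : (↑q * x')^2 + 2*(↑q * y')^2 = (q:ℤ)^2 * (x'^2 + 2*y'^2) := by ring
      have hM : x'^2 + 2*y'^2 ≠ 0 := by
        intro h0; apply hne; rw [key, h0, mul_zero]
      have hq2 : ((q:ℤ)^2) ≠ 0 := pow_ne_zero _ (by exact_mod_cast hq.ne_zero)
      have hvalq : padicValInt q ((↑q * x')^2 + 2*(↑q * y')^2)
          = 2 + padicValInt q (x'^2 + 2*y'^2) := by
        rw [key, padicValInt.mul hq2 hM]
        congr 1
        have : ((q:ℤ)^2) = ((q^2 : ℕ) : ℤ) := by push_cast; ring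
        rw [this, padicValInt.of_nat, padicValNat.prime_pow]
      rw [hvalq]
      have hlt : (x'^2 + 2*y'^2).natAbs < n := by
        rw [← hn, key, Int.natAbs_mul]
        have h1 : 1 < ((q:ℤ)^2).natAbs := by
          have := hq.two_le
          simp [Int.natAbs_pow]
          nlinarith
        calc (x'^2 + 2*y'^2).natAbs
            < ((q:ℤ)^2).natAbs * (x'^2 + 2*y'^2).natAbs := by
              exact lt_mul_of_one_lt_left (Int.natAbs_pos.mpr hM) h1
          _ = _ := rfl
      have := ih _ hlt x' y' rfl hM
      exact even_two.add this
    · rw [padicValInt.eq_zero_of_not_dvd (pretzel_not_dvd_aux q hq hsq x y hd)]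
      exact Even.zero

/-- If `N` is a sum `A^2 + 2 B^2` of rationals, then its `q`-adic valuation is even
whenever `-2` is not a square mod the prime `q`. -/
lemma pretzel_even_padicValRat (q : ℕ) (hq : q.Prime) (hsq : ¬ IsSquare (-2 : ZMod q))
    (N A B : ℚ) (hN : N ≠ 0) (hNAB : N = A^2 + 2*B^2) : Even (padicValRat q N) := by
  haveI : Fact q.Prime := ⟨hq⟩
  set x : ℤ := A.num * B.den with hx
  set y : ℤ := B.num * A.den with hy
  set d : ℤ := (A.den : ℤ) * (B.den : ℤ) with hd
  have hAd : ((A.den : ℕ) : ℚ) ≠ 0 := by exact_mod_cast A.den_ne_zero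
  have hBd : ((B.den : ℕ) : ℚ) ≠ 0 := by exact_mod_cast B.den_ne_zero
  have hdQ : ((d : ℤ) : ℚ) ≠ 0 := by rw [hd]; push_cast; exact mul_ne_zero hAd hBd
  have hAe : (A.num : ℚ) = A * (A.den : ℚ) := (div_eq_iff hAd).mp (Rat.num_div_den A)
  have hBe : (B.num : ℚ) = B * (B.den : ℚ) := (div_eq_iff hBd).mp (Rat.num_div_den B)
  have hxy : ((x^2 + 2*y^2 : ℤ) : ℚ) = N * ((d : ℤ) : ℚ)^2 := by
    rw [hx, hy, hd]
    push_cast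
    rw [hAe, hBe, hNAB]
    ring
  have hnum : (x^2 + 2*y^2 : ℤ) ≠ 0 := by
    intro h0
    apply hN
    have : N * ((d : ℤ) : ℚ)^2 = 0 := by rw [← hxy, h0]; norm_num
    exact (mul_eq_zero.mp this).resolve_right (pow_ne_zero _ hdQ)
  have hNeq : N = ((x^2 + 2*y^2 : ℤ) : ℚ) / ((d : ℤ) : ℚ)^2 := by
    field_simp [hxy]
    exact hxy.symm
  rw [hNeq, padicValRat.div (by exact_mod_cast hnum) (pow_ne_zero _ hdQ)]
  have e1 : Even (padicValRat q ((x^2 + 2*y^2 : ℤ) : ℚ)) := by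
    rw [padicValRat.of_int]
    exact_mod_cast pretzel_even_val_aux q hq hsq _ x y rfl hnum
  have e2 : Even (padicValRat q (((d : ℤ) : ℚ)^2)) := by
    rw [padicValRat.pow]
    exact even_two_mul _
  exact e1.sub e2

/-- If `N ≠ 0` has odd `q`-adic valuation at an odd prime `q` modulo which `-2` is not a
square, then `⟨-1, -2, N⟩` is not equivalent to `⟨-2N⟩ ⊕ H`. -/
theorem pretzel_witt_obstruction (q : ℕ) (hq : q.Prime) (hq2 : Odd q) (N : ℚ)
    (hN : N ≠ 0) (hval : Odd (padicValRat q N)) (hsq : ¬ IsSquare (-2 : ZMod q)) :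
    ¬ QuadraticMap.Equivalent
      (weightedSumSquares ℚ ![(-1 : ℚ), -2, N])
      (weightedSumSquares ℚ ![-2 * N, 1, -1]) := by
  haveI : Fact q.Prime := ⟨hq⟩
  rintro ⟨φ⟩
  set w : Fin 3 → ℚ := ![0, 1, 1] with hw
  have hw0 : w ≠ 0 := by
    intro h
    have : w 1 = 0 := by rw [h]; rfl
    simp [hw] at this
  set v : Fin 3 → ℚ := φ.symm w with hv
  have hv0 : v ≠ 0 := by
    intro h
    apply hw0
    have h2 : φ.symm.toLinearEquiv w = 0 := h
    simpa using φ.symm.toLinearEquiv.injective (by simp [h2])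
  have hQ : weightedSumSquares ℚ ![(-1 : ℚ), -2, N] v = 0 := by
    rw [hv, φ.symm.map_app]
    simp [hw, Fin.sum_univ_three]
  rw [weightedSumSquares_apply] at hQ
  rw [Fin.sum_univ_three] at hQ
  simp only [Matrix.cons_val_zero, Matrix.cons_val_one, Matrix.head_cons,
    Matrix.cons_val_two, Matrix.tail_cons, smul_eq_mul] at hQ
  set a := v 0; set b := v 1; set c := v 2
  have hc : c ≠ 0 := by
    intro h
    rw [h] at hQ
    have ha : a = 0 := by nlinarith
    have hb : b = 0 := by nlinarith
    apply hv0
    funext i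
    fin_cases i <;> assumption
  have hNAB : N = (a/c)^2 + 2*(b/c)^2 := by
    field_simp
    linarith [hQ]
  exact (Int.not_odd_iff_even.mpr
    (pretzel_even_padicValRat q hq hsq N (a/c) (b/c) hN hNAB)) hval
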